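/- Let β > 0 and let f be defined on the open strip S_β = {z ∈ ℂ : |Im z| < 2π/β} by f(z) = z/(1 - e^{-βz}) for z ≠ 0 and f(0) = 1/β. Then there exists a function h analytic on S_β such that h(z)² = f(z) for all z ∈ S_β and h(u) = √(u/(1 - e^{-βu})) > 0 for all real u ≠ 0 (with h(0) = 1/√β); i.e. the square root appearing in the definition of g_β admits an analytic extension to the strip S_β. -/

import Mathlib

open Complex Filter Topology Set

lemma aux_sinh_lt {x : ℝ} (hx : 0 < x) : Real.sinh x < x * Real.cosh x := by
  have h : StrictMonoOn (fun t : ℝ => t * Real.cosh t - Real.sinh t) (Set.Ici 0) := by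
    apply strictMonoOn_of_deriv_pos (convex_Ici 0)
    · exact ((continuous_id.mul Real.continuous_cosh).sub Real.continuous_sinh).continuousOn
    · intro t ht
      rw [interior_Ici, Set.mem_Ioi] at ht
      have hd : HasDerivAt (fun t : ℝ => t * Real.cosh t - Real.sinh t) (t * Real.sinh t) t := by
        have h1 := ((hasDerivAt_id t).mul (Real.hasDerivAt_cosh t)).sub (Real.hasDerivAt_sinh t)
        refine h1.congr_deriv ?_
        simp only [id_eq]
        ring
      rw [hd.deriv]
      exact mul_pos ht (Real.sinh_pos_iff.mpr ht)
  have h2 := h Set.self_mem_Ici (Set.mem_Ici.mpr hx.le) hx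
  simp only [zero_mul, Real.sinh_zero, sub_zero] at h2
  linarith

lemma aux_N_pos {x y : ℝ} (hx : 0 < x) (hy : 0 < y) (hyπ : y < Real.pi) :
    0 < x * Real.cosh x * Real.sin y - y * Real.sinh x * Real.cos y := by
  have hsin : 0 < Real.sin y := Real.sin_pos_of_pos_of_lt_pi hy hyπ
  have hcosh : 0 < Real.cosh x := Real.cosh_pos x
  have hsinh : 0 < Real.sinh x := Real.sinh_pos_iff.mpr hx
  rcases le_or_gt (Real.cos y) 0 with hc | hc
  · nlinarith [mul_pos (mul_pos hx hcosh) hsin,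
      mul_nonpos_of_nonneg_of_nonpos (mul_nonneg hy.le hsinh.le) hc]
  · have hy2 : y < Real.pi / 2 := by
      by_contra hy2
      push_neg at hy2
      exact absurd (Real.cos_nonpos_of_pi_div_two_le_of_le hy2
        (by linarith [Real.pi_pos])) (not_le.mpr hc)
    have ht : y < Real.tan y := Real.lt_tan hy hy2
    rw [Real.tan_eq_sin_div_cos] at ht
    have h1 : y * Real.cos y < Real.sin y := by
      rw [lt_div_iff₀ hc] at ht
      linarith
    have h2 := aux_sinh_lt hx
    nlinarith [mul_lt_mul_of_pos_right h1 hsinh, mul_lt_mul_of_pos_left h2 hsin]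

lemma aux_N_ne {x y : ℝ} (hx : x ≠ 0) (hy : y ≠ 0) (hyπ : |y| < Real.pi) :
    x * Real.cosh x * Real.sin y - y * Real.sinh x * Real.cos y ≠ 0 := by
  have h := abs_lt.mp hyπ
  rcases hx.lt_or_gt with hx' | hx' <;> rcases hy.lt_or_gt with hy' | hy'
  · have := aux_N_pos (x := -x) (y := -y) (by linarith) (by linarith) (by linarith)
    simp only [Real.cosh_neg, Real.sinh_neg, Real.sin_neg, Real.cos_neg] at this
    intro hcon; nlinarith
  · have := aux_N_pos (x := -x) (y := y) (by linarith) hy' h.2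
    simp only [Real.cosh_neg, Real.sinh_neg] at this
    intro hcon; nlinarith
  · have := aux_N_pos (x := x) (y := -y) hx' (by linarith) (by linarith)
    simp only [Real.sin_neg, Real.cos_neg] at this
    intro hcon; nlinarith
  · have := aux_N_pos hx' hy' h.2
    intro hcon; nlinarith

lemma aux_slit {w : ℂ} (hw : w ≠ 0) (him : |w.im| < Real.pi) :
    Complex.sinh w / w ∈ Complex.slitPlane := by
  have hns : 0 < Complex.normSq w := Complex.normSq_pos.mpr hw
  have hsinh : Complex.sinh w = ((Real.sinh w.re * Real.cos w.im : ℝ) : ℂ)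
      + ((Real.cosh w.re * Real.sin w.im : ℝ) : ℂ) * Complex.I := by
    conv_lhs => rw [← Complex.re_add_im w]
    rw [Complex.sinh_add, Complex.sinh_mul_I, Complex.cosh_mul_I]
    push_cast [← Complex.ofReal_sinh, ← Complex.ofReal_cosh, ← Complex.ofReal_sin,
      ← Complex.ofReal_cos]
    ring
  have hre : (Complex.sinh w / w).re =
      (Real.sinh w.re * Real.cos w.im * w.re + Real.cosh w.re * Real.sin w.im * w.im)
        / Complex.normSq w := by
    rw [Complex.div_re, hsinh]
    simp [Complex.add_re, Complex.add_im, Complex.mul_re, Complex.mul_im, Complex.sinh_ofReal_re, Complex.cosh_ofReal_re, Complex.sin_ofReal_re, Complex.cos_ofReal_re]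
    ring
  have him' : (Complex.sinh w / w).im =
      (Real.cosh w.re * Real.sin w.im * w.re - Real.sinh w.re * Real.cos w.im * w.im)
        / Complex.normSq w := by
    rw [Complex.div_im, hsinh]
    simp [Complex.add_re, Complex.add_im, Complex.mul_re, Complex.mul_im, Complex.sinh_ofReal_re, Complex.cosh_ofReal_re, Complex.sin_ofReal_re, Complex.cos_ofReal_re]
    ring
  rw [Complex.mem_slitPlane_iff]
  by_cases hy : w.im = 0
  · have hxne : w.re ≠ 0 := by
      intro hx; exact hw (Complex.ext hx hy)
    left
    rw [hre, hy]
    simp only [Real.cos_zero, Real.sin_zero, mul_zero, mul_one, add_zero]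
    have : 0 < Real.sinh w.re * w.re := by
      rcases hxne.lt_or_gt with h' | h'
      · nlinarith [(Real.sinh_neg_iff (x := w.re)).mpr h']
      · nlinarith [Real.sinh_pos_iff.mpr h']
    positivity
  · by_cases hx : w.re = 0
    · left
      rw [hre, hx]
      simp only [Real.sinh_zero, Real.cosh_zero, zero_mul, mul_zero, one_mul, zero_add]
      have habs := abs_lt.mp him
      have : 0 < Real.sin w.im * w.im := by
        rcases lt_or_gt_of_ne hy with h' | h'
        · have : Real.sin w.im < 0 := Real.sin_neg_of_neg_of_neg_pi_lt h' (by linarith)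
          nlinarith
        · nlinarith [Real.sin_pos_of_pos_of_lt_pi h' habs.2]
      positivity
    · right
      rw [him']
      have hnum := aux_N_ne hx hy him
      intro hcon
      apply hnum
      have := (div_eq_zero_iff.mp hcon).resolve_right hns.ne'
      linarith [this]

/-- The square root `√(u/(1-e^{-βu}))` appearing in the gluing map (7)
admits an analytic extension to the strip `S_β = {z : |Im z| < 2π/β}`: there is a
function `h`, analytic on `S_β`, with `h(z)² = f(z)` there (`f(z) = z/(1-e^{-βz})`,
`f(0) = 1/β`), and `h(u) = √(u/(1-e^{-βu})) > 0` for real `u ≠ 0`, `h(0) = 1/√β`. -/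
theorem thermal_weight_analytic_square_root
    (β : ℝ) (hβ : 0 < β) (f : ℂ → ℂ)
    (hf : ∀ z : ℂ, z ≠ 0 → f z = z / (1 - Complex.exp (-(β : ℂ) * z)))
    (hf0 : f 0 = 1 / (β : ℂ)) :
    ∃ h : ℂ → ℂ,
      (∀ z ∈ {z : ℂ | |z.im| < 2 * Real.pi / β}, AnalyticAt ℂ h z) ∧
      (∀ z ∈ {z : ℂ | |z.im| < 2 * Real.pi / β}, h z ^ 2 = f z) ∧
      (∀ u : ℝ, u ≠ 0 →
        h u = (Real.sqrt (u / (1 - Real.exp (-β * u))) : ℂ) ∧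
          0 < Real.sqrt (u / (1 - Real.exp (-β * u)))) ∧
      h 0 = ((1 / Real.sqrt β : ℝ) : ℂ) := by
  have hβ' : (β : ℂ) ≠ 0 := by exact_mod_cast hβ.ne'
  set Q : ℂ → ℂ := fun z => if z = 0 then (β : ℂ) else 2 * Complex.sinh ((β : ℂ) * z / 2) / z
    with hQdef
  have hQne : ∀ z : ℂ, z ≠ 0 → Q z = 2 * Complex.sinh ((β : ℂ) * z / 2) / z :=
    fun z hz => if_neg hz
  have hQ0 : Q 0 = (β : ℂ) := if_pos rfl
  -- Q is entire
  have hbase : ∀ z : ℂ, z ≠ 0 → AnalyticAt ℂ Q z := by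
    intro z hz
    have h1 : AnalyticAt ℂ (fun w => 2 * Complex.sinh ((β : ℂ) * w / 2) / w) z := by
      rw [Complex.analyticAt_iff_eventually_differentiableAt]
      filter_upwards [isOpen_compl_singleton.mem_nhds hz] with w hw
      have hd : DifferentiableAt ℂ (fun w : ℂ => 2 * Complex.sinh ((β : ℂ) * w / 2)) w := by
        have hg : Differentiable ℂ (fun w : ℂ => (β : ℂ) * w / 2) :=
          (differentiable_const _ |>.mul differentiable_id).div_const 2
        exact ((Complex.differentiable_sinh.comp hg).const_mul 2).differentiableAt
      exact hd.div differentiableAt_id hw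
    apply h1.congr
    filter_upwards [isOpen_compl_singleton.mem_nhds hz] with w hw
    exact (hQne w hw).symm
  have hQanal : ∀ z : ℂ, AnalyticAt ℂ Q z := by
    intro z
    by_cases hz : z = 0
    · subst hz
      apply Complex.analyticAt_of_differentiable_on_punctured_nhds_of_continuousAt
      · filter_upwards [self_mem_nhdsWithin] with w hw
        exact (hbase w hw).differentiableAt
      · have hder : HasDerivAt (fun z : ℂ => 2 * Complex.sinh ((β : ℂ) * z / 2)) (β : ℂ) 0 := by
          have h1 : HasDerivAt (fun z : ℂ => (β : ℂ) * z / 2) ((β : ℂ) / 2) 0 := by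
            simpa using ((hasDerivAt_id (0 : ℂ)).const_mul (β : ℂ)).div_const 2
          have h2 := (Complex.hasDerivAt_sinh ((β : ℂ) * 0 / 2)).comp 0 h1
          have h3 := h2.const_mul (2 : ℂ)
          have h4 : ((β : ℂ) * 0 / 2) = 0 := by ring
          rw [h4, Complex.cosh_zero] at h3
          refine h3.congr_deriv ?_
          ring
        have ht := hasDerivAt_iff_tendsto_slope.mp hder
        have ht2 : Filter.Tendsto Q (nhdsWithin (0 : ℂ) {(0 : ℂ)}ᶜ) (nhds (β : ℂ)) := by
          apply ht.congr'
          filter_upwards [self_mem_nhdsWithin] with w hw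
          rw [slope_def_field, hQne w hw]
          simp
        rw [ContinuousAt, hQ0, ← nhdsNE_sup_pure (0 : ℂ)]
        refine Filter.tendsto_sup.mpr ⟨ht2, ?_⟩
        have := tendsto_pure_nhds Q (0 : ℂ)
        rwa [hQ0] at this
    · exact hbase z hz
  -- the half-argument, needed below
  have hwim : ∀ z : ℂ, |z.im| < 2 * Real.pi / β → |((β : ℂ) * z / 2).im| < Real.pi := by
    intro z hz
    have him : ((β : ℂ) * z / 2).im = β * z.im / 2 := by
      simp [Complex.div_im, Complex.mul_im, Complex.normSq]
    rw [him, abs_div, abs_mul, abs_of_pos hβ, show |(2:ℝ)| = 2 by norm_num]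
    rw [lt_div_iff₀ hβ] at hz
    linarith [hz]
  have hwne : ∀ z : ℂ, z ≠ 0 → (β : ℂ) * z / 2 ≠ 0 := by
    intro z hz
    simp [hβ', hz]
  -- nonvanishing of sinh on the strip
  have hsinh_ne : ∀ z ∈ {z : ℂ | |z.im| < 2 * Real.pi / β}, z ≠ 0 →
      Complex.sinh ((β : ℂ) * z / 2) ≠ 0 := by
    intro z hz h0 hcon
    have h1 : Complex.sin (((β : ℂ) * z / 2) * Complex.I) = 0 := by
      rw [Complex.sin_mul_I, hcon, zero_mul]
    rw [Complex.sin_eq_zero_iff] at h1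
    obtain ⟨k, hk⟩ := h1
    have hw : (β : ℂ) * z / 2 = -((k : ℂ) * (Real.pi : ℂ)) * Complex.I := by
      have h : ((β : ℂ) * z / 2) * Complex.I * Complex.I
          = (k : ℂ) * (Real.pi : ℂ) * Complex.I := by rw [hk]
      rw [mul_assoc, Complex.I_mul_I, mul_neg_one] at h
      linear_combination -h
    have him : ((β : ℂ) * z / 2).im = -((k : ℝ) * Real.pi) := by
      rw [hw]
      simp
    have h2 := hwim z hz
    rw [him, abs_neg, abs_mul, abs_of_pos Real.pi_pos] at h2
    have hπ := Real.pi_pos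
    have hk1 : |(k : ℝ)| < 1 := by
      by_contra hcon'
      push_neg at hcon'
      nlinarith
    have hk0 : k = 0 := by
      have h4 : |k| < 1 := by exact_mod_cast hk1
      have h5 := abs_lt.mp h4
      omega
    apply hwne z h0
    rw [hw, hk0]
    simp
  -- slit plane membership
  have hQslit : ∀ z ∈ {z : ℂ | |z.im| < 2 * Real.pi / β}, Q z ∈ Complex.slitPlane := by
    intro z hz
    by_cases h0 : z = 0
    · subst h0
      rw [hQ0]
      exact Complex.ofReal_mem_slitPlane.mpr hβ
    · have hQeq : Q z = (β : ℂ) * (Complex.sinh ((β : ℂ) * z / 2) / ((β : ℂ) * z / 2)) := by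
        rw [hQne z h0]
        field_simp
      rw [hQeq]
      have hs := aux_slit (hwne z h0) (hwim z hz)
      rw [Complex.mem_slitPlane_iff] at hs ⊢
      rcases hs with h | h
      · left
        simp only [Complex.mul_re, Complex.ofReal_re, Complex.ofReal_im, zero_mul, sub_zero]
        exact mul_pos hβ h
      · right
        simp only [Complex.mul_im, Complex.ofReal_re, Complex.ofReal_im, zero_mul, add_zero]
        exact mul_ne_zero hβ.ne' h
  have hQne0 : ∀ z ∈ {z : ℂ | |z.im| < 2 * Real.pi / β}, Q z ≠ 0 :=
    fun z hz => Complex.slitPlane_ne_zero (hQslit z hz)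
  -- f in terms of Q
  have hfQ : ∀ z ∈ {z : ℂ | |z.im| < 2 * Real.pi / β},
      f z = Complex.exp ((β : ℂ) * z / 2) / Q z := by
    intro z hz
    by_cases h0 : z = 0
    · subst h0
      rw [hf0, hQ0]
      simp
    · rw [hf z h0, hQne z h0]
      have e1 : Complex.exp (-((β : ℂ) * z / 2)) * Complex.exp ((β : ℂ) * z / 2) = 1 := by
        rw [← Complex.exp_add]
        simp
      have e2 : Complex.exp (-((β : ℂ) * z / 2)) * Complex.exp (-((β : ℂ) * z / 2))
          = Complex.exp (-(β : ℂ) * z) := by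
        rw [← Complex.exp_add]
        ring_nf
      have hfact : 1 - Complex.exp (-(β : ℂ) * z)
          = Complex.exp (-((β : ℂ) * z / 2)) * (2 * Complex.sinh ((β : ℂ) * z / 2)) := by
        rw [show Complex.sinh ((β : ℂ) * z / 2)
            = (Complex.exp ((β : ℂ) * z / 2) - Complex.exp (-((β : ℂ) * z / 2))) / 2 by
          have := Complex.two_sinh ((β : ℂ) * z / 2)
          linear_combination this / 2]
        linear_combination e2 - e1
      rw [hfact, Complex.exp_neg]
      have hs := hsinh_ne z hz h0
      have he := Complex.exp_ne_zero ((β : ℂ) * z / 2)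
      field_simp
  -- the square root function
  refine ⟨fun z => Complex.exp ((β : ℂ) * z / 4) * Q z ^ (-(1 / 2) : ℂ), ?_, ?_, ?_, ?_⟩
  · intro z hz
    apply AnalyticAt.mul
    · apply AnalyticAt.cexp
      exact (analyticAt_const.mul analyticAt_id).div analyticAt_const (by norm_num)
    · exact (hQanal z).cpow analyticAt_const (hQslit z hz)
  · intro z hz
    have hQz := hQne0 z hz
    have hpow : (Q z ^ (-(1 / 2) : ℂ)) ^ 2 = (Q z)⁻¹ := by
      rw [Complex.cpow_def_of_ne_zero hQz, sq, ← Complex.exp_add,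
        show Complex.log (Q z) * -(1 / 2 : ℂ) + Complex.log (Q z) * -(1 / 2 : ℂ)
          = -Complex.log (Q z) by ring,
        Complex.exp_neg, Complex.exp_log hQz]
    rw [mul_pow, hpow, sq, ← Complex.exp_add,
      show (β : ℂ) * z / 4 + (β : ℂ) * z / 4 = (β : ℂ) * z / 2 by ring,
      hfQ z hz]
    exact (div_eq_mul_inv _ _).symm
  · intro u hu
    have huC : (u : ℂ) ≠ 0 := by exact_mod_cast hu
    set qr : ℝ := 2 * Real.sinh (β * u / 2) / u with hqrdef
    have hs0 : β * u / 2 ≠ 0 := div_ne_zero (mul_ne_zero hβ.ne' hu) two_ne_zero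
    have hqr : 0 < qr := by
      rcases hu.lt_or_gt with h' | h'
      · have : Real.sinh (β * u / 2) < 0 := Real.sinh_neg_iff.mpr (by nlinarith)
        rw [hqrdef]
        exact div_pos_of_neg_of_neg (by linarith) h'
      · have : 0 < Real.sinh (β * u / 2) := Real.sinh_pos_iff.mpr (by positivity)
        rw [hqrdef]
        positivity
    have hQu : Q (u : ℂ) = ((qr : ℝ) : ℂ) := by
      rw [hQne _ huC]
      have harg : (β : ℂ) * (u : ℂ) / 2 = ((β * u / 2 : ℝ) : ℂ) := by push_cast; ring
      rw [harg, ← Complex.ofReal_sinh]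
      rw [hqrdef]
      push_cast
      ring
    have hcpow : ((qr : ℝ) : ℂ) ^ (-(1 / 2) : ℂ) = ((qr ^ (-(1 / 2) : ℝ) : ℝ) : ℂ) := by
      rw [Complex.ofReal_cpow hqr.le]
      norm_num
    have hexp4 : Complex.exp ((β : ℂ) * (u : ℂ) / 4) = ((Real.exp (β * u / 4) : ℝ) : ℂ) := by
      rw [Complex.ofReal_exp]
      push_cast
      ring_nf
    set B : ℝ := Real.exp (β * u / 4) * qr ^ (-(1 / 2) : ℝ) with hBdef
    have hBpos : 0 < B := by
      rw [hBdef]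
      positivity
    have hBsq : B ^ 2 = Real.exp (β * u / 2) / qr := by
      rw [hBdef, mul_pow]
      have h1 : (qr ^ (-(1 / 2) : ℝ)) ^ 2 = qr⁻¹ := by
        rw [← Real.rpow_natCast (qr ^ (-(1 / 2) : ℝ)) 2, ← Real.rpow_mul hqr.le]
        norm_num
        exact Real.rpow_neg_one qr
      have h2 : Real.exp (β * u / 4) ^ 2 = Real.exp (β * u / 2) := by
        rw [sq, ← Real.exp_add]
        ring_nf
      rw [h1, h2]
      exact (div_eq_mul_inv _ _).symm
    have hA : u / (1 - Real.exp (-β * u)) = B ^ 2 := by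
      have e1 : Real.exp (-(β * u / 2)) * Real.exp (β * u / 2) = 1 := by
        rw [← Real.exp_add]
        simp
      have e2 : Real.exp (-(β * u / 2)) * Real.exp (-(β * u / 2)) = Real.exp (-β * u) := by
        rw [← Real.exp_add]
        ring_nf
      have hfact : 1 - Real.exp (-β * u)
          = Real.exp (-(β * u / 2)) * (2 * Real.sinh (β * u / 2)) := by
        rw [Real.sinh_eq]
        linear_combination e2 - e1
      rw [hBsq, hfact, Real.exp_neg]
      have hsne : Real.sinh (β * u / 2) ≠ 0 := by
        simpa using hs0
      have hexppos := Real.exp_pos (β * u / 2)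
      rw [hqrdef]
      field_simp [hqrdef]
    constructor
    · show Complex.exp ((β : ℂ) * (u : ℂ) / 4) * Q (u : ℂ) ^ (-(1 / 2) : ℂ)
        = ((Real.sqrt (u / (1 - Real.exp (-β * u))) : ℝ) : ℂ)
      rw [hQu, hcpow, hexp4, ← Complex.ofReal_mul, hA, Real.sqrt_sq hBpos.le]
    · rw [hA]
      exact Real.sqrt_pos.mpr (by positivity)
  · show Complex.exp ((β : ℂ) * 0 / 4) * Q 0 ^ (-(1 / 2) : ℂ) = ((1 / Real.sqrt β : ℝ) : ℂ)
    rw [hQ0]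
    have : ((β : ℝ) : ℂ) ^ (-(1 / 2) : ℂ) = ((β ^ (-(1 / 2) : ℝ) : ℝ) : ℂ) := by
      rw [Complex.ofReal_cpow hβ.le]
      norm_num
    rw [this]
    simp only [mul_zero, zero_div, Complex.exp_zero, one_mul]
    congr 1
    rw [Real.rpow_neg hβ.le, Real.sqrt_eq_rpow]
    norm_num
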